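/- The infimum of the energy E(x,y,ẋ,ẏ) = (1/2)(ẋ²+ẏ²) + V(x,y) over the constraint set {W(x,y) = 0} equals E* = -(1/2)(α+2)² α^(-α/(α+2)), and it is attained exactly at the points (±α^(1/(α+2)), 0, 0, 0). -/

import Mathlib

noncomputable def V (α x y : ℝ) : ℝ :=
  -((α + 2) / 2) * x ^ 2 - (α + 2) / (x ^ 2 + y ^ 2) ^ (α / 2)

noncomputable def W (α x y : ℝ) : ℝ :=
  (α + 2) * (x ^ 2 - α / (x ^ 2 + y ^ 2) ^ (α / 2))

noncomputable def E (α x y vx vy : ℝ) : ℝ := (1 / 2) * (vx ^ 2 + vy ^ 2) + V α x y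

noncomputable def Estar (α : ℝ) : ℝ := -(1 / 2) * (α + 2) ^ 2 * α ^ (-(α / (α + 2)))

private lemma gs_facts (α : ℝ) (hα : 0 < α) :
    0 < α ^ (1 / (α + 2)) ∧
    (α ^ (1 / (α + 2))) ^ 2 = α * α ^ (-(α / (α + 2))) ∧
    ((α ^ (1 / (α + 2))) ^ 2) ^ (α / 2) = α ^ (α / (α + 2)) ∧
    α ^ (α / (α + 2)) * α ^ (-(α / (α + 2))) = 1 := by
  have hα2 : (0:ℝ) < α + 2 := by linarith
  have hb2 : (α ^ (1 / (α + 2))) ^ 2 = α ^ ((2:ℝ) / (α + 2)) := by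
    rw [← Real.rpow_natCast (α ^ (1 / (α + 2))) 2, ← Real.rpow_mul hα.le]
    norm_num
    congr 1
    ring
  refine ⟨Real.rpow_pos_of_pos hα _, ?_, ?_, ?_⟩
  · rw [hb2,
      show α * α ^ (-(α / (α + 2))) = α ^ (1 + -(α / (α + 2))) by
        rw [Real.rpow_add hα, Real.rpow_one]]
    congr 1
    field_simp
    ring
  · rw [hb2, ← Real.rpow_mul hα.le]
    congr 1
    field_simp
  · rw [← Real.rpow_add hα]
    simp

private lemma gs_prodcon (α : ℝ) (hα : 0 < α) :
    (α ^ (1 / (α + 2))) ^ 2 * ((α ^ (1 / (α + 2))) ^ 2) ^ (α / 2) = α := by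
  obtain ⟨-, hαc, hβd, hdc⟩ := gs_facts α hα
  rw [hβd, hαc, mul_assoc, mul_comm (α ^ (-(α / (α + 2)))), hdc, mul_one]

private lemma gs_hconstr (α x y : ℝ) (hα : 0 < α) (hne : (x, y) ≠ (0, 0))
    (hW : W α x y = 0) : x ^ 2 * (x ^ 2 + y ^ 2) ^ (α / 2) = α := by
  have hα2 : (0:ℝ) < α + 2 := by linarith
  have hr : 0 < x ^ 2 + y ^ 2 := by
    rcases (not_and_or.mp (by simpa [Prod.ext_iff] using hne)) with h | h <;> positivity
  have hrp : 0 < (x ^ 2 + y ^ 2) ^ (α / 2) := Real.rpow_pos_of_pos hr _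
  have h1 : x ^ 2 - α / (x ^ 2 + y ^ 2) ^ (α / 2) = 0 := by
    rcases mul_eq_zero.mp hW with h | h
    · linarith
    · exact h
  have h2 : x ^ 2 = α / (x ^ 2 + y ^ 2) ^ (α / 2) := by linarith
  nth_rewrite 1 [h2]
  rw [div_mul_cancel₀ _ hrp.ne']

private lemma gs_key (α x y : ℝ) (hα : 0 < α) (hr : 0 < x ^ 2 + y ^ 2)
    (hcon : x ^ 2 * (x ^ 2 + y ^ 2) ^ (α / 2) = α) :
    0 < x ^ 2 ∧ x ^ 2 ≤ (α ^ (1 / (α + 2))) ^ 2 ∧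
      (x ^ 2 = (α ^ (1 / (α + 2))) ^ 2 → y = 0) := by
  have hα2 : (0:ℝ) < α + 2 := by linarith
  have hrp : 0 < (x ^ 2 + y ^ 2) ^ (α / 2) := Real.rpow_pos_of_pos hr _
  have hx : x ≠ 0 := by
    intro h
    rw [h] at hcon
    norm_num at hcon
    exact hα.ne' hcon.symm
  have hx2 : 0 < x ^ 2 := by positivity
  have hb2 : (α ^ (1 / (α + 2))) ^ 2 = α ^ ((2:ℝ) / (α + 2)) := by
    rw [← Real.rpow_natCast (α ^ (1 / (α + 2))) 2, ← Real.rpow_mul hα.le]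
    norm_num
    congr 1
    ring
  have h1 : x ^ 2 ≤ x ^ 2 + y ^ 2 := by nlinarith [sq_nonneg y]
  have h2 : (x ^ 2) ^ (α / 2) ≤ (x ^ 2 + y ^ 2) ^ (α / 2) :=
    Real.rpow_le_rpow hx2.le h1 (by positivity)
  have h3 : x ^ 2 * (x ^ 2) ^ (α / 2) ≤ α := by
    calc x ^ 2 * (x ^ 2) ^ (α / 2) ≤ x ^ 2 * (x ^ 2 + y ^ 2) ^ (α / 2) :=
          mul_le_mul_of_nonneg_left h2 hx2.le
      _ = α := hcon
  have h4 : x ^ 2 * (x ^ 2) ^ (α / 2) = (x ^ 2) ^ ((α + 2) / 2) := by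
    rw [show (α + 2) / 2 = 1 + α / 2 by ring, Real.rpow_add hx2, Real.rpow_one]
  have h5 : (x ^ 2) ^ ((α + 2) / 2) ≤ α := h4 ▸ h3
  have h6 : ((x ^ 2) ^ ((α + 2) / 2)) ^ ((2:ℝ) / (α + 2)) ≤ α ^ ((2:ℝ) / (α + 2)) :=
    Real.rpow_le_rpow (by positivity) h5 (by positivity)
  rw [← Real.rpow_mul hx2.le,
    show (α + 2) / 2 * ((2:ℝ) / (α + 2)) = 1 by field_simp, Real.rpow_one] at h6
  have hle : x ^ 2 ≤ (α ^ (1 / (α + 2))) ^ 2 := by rw [hb2]; exact h6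
  refine ⟨hx2, hle, ?_⟩
  intro heq
  by_contra hy
  have hy2 : 0 < y ^ 2 := by positivity
  have hlt : x ^ 2 < x ^ 2 + y ^ 2 := by linarith
  have h7 : (x ^ 2) ^ (α / 2) < (x ^ 2 + y ^ 2) ^ (α / 2) :=
    Real.rpow_lt_rpow hx2.le hlt (by positivity)
  have h8 : x ^ 2 * (x ^ 2) ^ (α / 2) = α := by
    rw [heq]; exact gs_prodcon α hα
  nlinarith [hcon, h7, hx2]

private lemma gs_hE (α x y vx vy : ℝ) (hα : 0 < α) (hx2 : 0 < x ^ 2)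
    (hcon : x ^ 2 * (x ^ 2 + y ^ 2) ^ (α / 2) = α) :
    E α x y vx vy = (1 / 2) * (vx ^ 2 + vy ^ 2) - ((α + 2) ^ 2 / (2 * α)) * x ^ 2 := by
  have hrp : (x ^ 2 + y ^ 2) ^ (α / 2) = α / x ^ 2 := by
    rw [eq_div_iff hx2.ne']
    linarith [hcon]
  simp only [E, V, hrp]
  field_simp
  ring

private lemma gs_hEstar (α : ℝ) (hα : 0 < α) :
    Estar α = -((α + 2) ^ 2 / (2 * α)) * (α ^ (1 / (α + 2))) ^ 2 := by
  obtain ⟨-, hαc, -, -⟩ := gs_facts α hα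
  rw [Estar, hαc]
  field_simp

private lemma gs_ground (α : ℝ) (hα : 0 < α) :
    W α (α ^ (1 / (α + 2))) 0 = 0 ∧ E α (α ^ (1 / (α + 2))) 0 0 0 = Estar α ∧
    W α (-(α ^ (1 / (α + 2)))) 0 = 0 ∧ E α (-(α ^ (1 / (α + 2)))) 0 0 0 = Estar α := by
  have hα2 : (0:ℝ) < α + 2 := by linarith
  obtain ⟨hβpos, hαc, hβd, hdc⟩ := gs_facts α hα
  have hprod := gs_prodcon α hα
  set β : ℝ := α ^ (1 / (α + 2))
  have hβ2 : 0 < β ^ 2 := pow_pos hβpos 2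
  have hβ20 : β ^ 2 + 0 ^ 2 = β ^ 2 := by ring
  have hβcon : β ^ 2 * (β ^ 2 + 0 ^ 2) ^ (α / 2) = α := by rw [hβ20]; exact hprod
  have hβrp : 0 < (β ^ 2 + 0 ^ 2) ^ (α / 2) := Real.rpow_pos_of_pos (by linarith) _
  have hdiv : α / (β ^ 2 + 0 ^ 2) ^ (α / 2) = β ^ 2 := by
    rw [eq_comm, eq_div_iff hβrp.ne']
    exact hβcon
  have hnegsq : (-β) ^ 2 = β ^ 2 := by ring
  have hES := gs_hEstar α hα
  refine ⟨?_, ?_, ?_, ?_⟩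
  · rw [W, hdiv]; ring
  · rw [gs_hE α β 0 0 0 hα hβ2 hβcon, hES]; ring
  · rw [W, hnegsq, hdiv]; ring
  · rw [gs_hE α (-β) 0 0 0 hα (by rw [hnegsq]; exact hβ2) (by rw [hnegsq]; exact hβcon),
      hnegsq, hES]
    ring

set_option maxHeartbeats 1600000 in
/-- The ground state energy `E*` is the minimum of the energy over the constraint set
`{W = 0}`, attained exactly at the two ground states `(±α^(1/(α+2)), 0, 0, 0)`. -/
theorem ground_state_energy (α : ℝ) (hα : 0 < α) :
    IsLeast {e : ℝ | ∃ x y vx vy : ℝ, (x, y) ≠ (0, 0) ∧ W α x y = 0 ∧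
        e = E α x y vx vy} (Estar α) ∧
    (∀ x y vx vy : ℝ, (x, y) ≠ (0, 0) → W α x y = 0 →
      (E α x y vx vy = Estar α ↔
        (x, y, vx, vy) = (α ^ (1 / (α + 2)), 0, 0, 0) ∨
        (x, y, vx, vy) = (-(α ^ (1 / (α + 2))), 0, 0, 0))) := by
  obtain ⟨hβpos, -, -, -⟩ := gs_facts α hα
  obtain ⟨hβW, hβE, hnegβW, hnegβE⟩ := gs_ground α hα
  set β : ℝ := α ^ (1 / (α + 2)) with hβdef
  clear_value β
  have hcoef : 0 < (α + 2) ^ 2 / (2 * α) := by positivity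
  have hES : Estar α = -((α + 2) ^ 2 / (2 * α)) * β ^ 2 := by
    rw [hβdef]; exact gs_hEstar α hα
  constructor
  · constructor
    · exact ⟨β, 0, 0, 0, by simp [Prod.ext_iff, hβpos.ne'], hβW, hβE.symm⟩
    · rintro e ⟨x, y, vx, vy, hne, hW, rfl⟩
      have hr : 0 < x ^ 2 + y ^ 2 := by
        rcases (not_and_or.mp (by simpa [Prod.ext_iff] using hne)) with h | h <;> positivity
      have hcon := gs_hconstr α x y hα hne hW
      obtain ⟨hx2, hle, -⟩ := gs_key α x y hα hr hcon
      rw [← hβdef] at hle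
      rw [gs_hE α x y vx vy hα hx2 hcon, hES]
      nlinarith [sq_nonneg vx, sq_nonneg vy,
        mul_nonneg hcoef.le (sub_nonneg.mpr hle)]
  · intro x y vx vy hne hW
    have hr : 0 < x ^ 2 + y ^ 2 := by
      rcases (not_and_or.mp (by simpa [Prod.ext_iff] using hne)) with h | h <;> positivity
    have hcon := gs_hconstr α x y hα hne hW
    obtain ⟨hx2, hle, heqy⟩ := gs_key α x y hα hr hcon
    rw [← hβdef] at hle heqy
    constructor
    · intro hEeq
      rw [gs_hE α x y vx vy hα hx2 hcon, hES] at hEeq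
      have hnn : 0 ≤ ((α + 2) ^ 2 / (2 * α)) * (β ^ 2 - x ^ 2) :=
        mul_nonneg hcoef.le (by linarith)
      have hvx2 : vx ^ 2 = 0 := by nlinarith [sq_nonneg vx, sq_nonneg vy]
      have hvy2 : vy ^ 2 = 0 := by nlinarith [sq_nonneg vx, sq_nonneg vy]
      have hvx : vx = 0 := by
        exact pow_eq_zero_iff (by norm_num : (2:ℕ) ≠ 0) |>.mp hvx2
      have hvy : vy = 0 := by
        exact pow_eq_zero_iff (by norm_num : (2:ℕ) ≠ 0) |>.mp hvy2
      have hxβ : x ^ 2 = β ^ 2 := by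
        by_contra h'
        have hlt : x ^ 2 < β ^ 2 := lt_of_le_of_ne hle h'
        nlinarith [mul_pos hcoef (show (0:ℝ) < β ^ 2 - x ^ 2 by linarith)]
      have hy0 : y = 0 := heqy hxβ
      have hfac : (x - β) * (x + β) = 0 := by nlinarith [hxβ]
      rcases mul_eq_zero.mp hfac with h | h
      · left
        simp only [Prod.mk.injEq]
        exact ⟨by linarith, hy0, hvx, hvy⟩
      · right
        simp only [Prod.mk.injEq]
        exact ⟨by linarith, hy0, hvx, hvy⟩
    · rintro (h | h) <;> simp only [Prod.mk.injEq] at h <;>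
        obtain ⟨h1, h2, h3, h4⟩ := h <;> subst h1 <;> subst h2 <;> subst h3 <;> subst h4
      · exact hβE
      · exact hnegβE
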